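/- Suppose the Weyl chamber $\mathbb{W}$ is nonempty and let $c:R_+\to(0,\infty)$ be any function. Then for every $x\in\mathbb{R}^d$ the equation $y=x+\sum_{\alpha\in R_+}\frac{c(\alpha)}{\langle\alpha,y\rangle}\alpha$ has a unique solution $y\in\mathbb{W}$. -/

import Mathlib

open scoped RealInnerProductSpace
open Finset

variable {E : Type*} [NormedAddCommGroup E] [InnerProductSpace ℝ E]

lemma hasFDerivAt_g (Rp : Finset E) (c : E → ℝ) (x y : E)
    (hy : ∀ α ∈ Rp, ⟪α, y⟫ ≠ 0) :
    HasFDerivAt (fun z => (1/2 : ℝ) * ⟪z - x, z - x⟫ - ∑ α ∈ Rp, c α * Real.log ⟪α, z⟫)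
      (innerSL ℝ (y - x - ∑ α ∈ Rp, (c α / ⟪α, y⟫) • α)) y := by
  have h1 : HasFDerivAt (fun z : E => (1/2 : ℝ) * ⟪z - x, z - x⟫) (innerSL ℝ (y - x)) y := by
    have hid : HasFDerivAt (fun z : E => z - x) (ContinuousLinearMap.id ℝ E) y :=
      (hasFDerivAt_id y).sub_const x
    have := (hid.inner ℝ hid).const_mul (1/2 : ℝ)
    refine this.congr_fderiv ?_
    ext v
    simp [fderivInnerCLM, inner_sub_left]
    rw [inner_sub_right, real_inner_comm v y, real_inner_comm v x]
    ring
  have h2 : HasFDerivAt (fun z : E => ∑ α ∈ Rp, c α * Real.log ⟪α, z⟫)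
      (∑ α ∈ Rp, (c α / ⟪α, y⟫) • innerSL ℝ α) y := by
    apply HasFDerivAt.fun_sum
    intro α hα
    have hlin : HasFDerivAt (fun z : E => ⟪α, z⟫) (innerSL ℝ α) y :=
      (innerSL ℝ α).hasFDerivAt
    have hlog := (Real.hasDerivAt_log (hy α hα)).comp_hasFDerivAt y hlin
    have := hlog.const_mul (c α)
    refine this.congr_fderiv ?_
    ext v
    simp [div_eq_mul_inv]
    ring
  have := h1.sub h2
  refine this.congr_fderiv ?_
  ext v
  simp [inner_sub_left, sum_inner, real_inner_smul_left, div_eq_mul_inv]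

lemma uniq_sol (Rp : Finset E) (c : E → ℝ) (hc : ∀ α ∈ Rp, 0 < c α) (x : E)
    (y₁ y₂ : E) (h₁ : ∀ α ∈ Rp, 0 < ⟪α, y₁⟫) (h₂ : ∀ α ∈ Rp, 0 < ⟪α, y₂⟫)
    (e₁ : y₁ = x + ∑ α ∈ Rp, (c α / ⟪α, y₁⟫) • α)
    (e₂ : y₂ = x + ∑ α ∈ Rp, (c α / ⟪α, y₂⟫) • α) : y₁ = y₂ := by
  have hd : y₁ - y₂ = ∑ α ∈ Rp, ((c α / ⟪α, y₁⟫) - (c α / ⟪α, y₂⟫)) • α := by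
    conv_lhs => rw [e₁, e₂]
    simp only [sub_smul, Finset.sum_sub_distrib]
    abel
  have key : ⟪y₁ - y₂, y₁ - y₂⟫ ≤ 0 := by
    nth_rewrite 1 [hd]
    rw [sum_inner]
    apply Finset.sum_nonpos
    intro α hα
    rw [real_inner_smul_left, inner_sub_right]
    have ha1 := h₁ α hα; have ha2 := h₂ α hα; have hca := hc α hα
    have hrw : c α / ⟪α, y₁⟫ - c α / ⟪α, y₂⟫
        = c α * (⟪α, y₂⟫ - ⟪α, y₁⟫) / (⟪α, y₁⟫ * ⟪α, y₂⟫) := by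
      field_simp
    rw [hrw, div_mul_eq_mul_div]
    apply div_nonpos_of_nonpos_of_nonneg
    · nlinarith [mul_nonneg hca.le (sq_nonneg (⟪α, y₁⟫ - ⟪α, y₂⟫))]
    · positivity
  have h0 : ⟪y₁ - y₂, y₁ - y₂⟫ = 0 := le_antisymm key real_inner_self_nonneg
  have := inner_self_eq_zero.mp h0
  rwa [sub_eq_zero] at this

set_option maxHeartbeats 1600000 in
lemma exists_sol [FiniteDimensional ℝ E] (Rp : Finset E) (hne : Rp.Nonempty)
    (c : E → ℝ) (hc : ∀ α ∈ Rp, 0 < c α)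
    (w : E) (hw : ∀ α ∈ Rp, 0 < ⟪α, w⟫) (x : E) :
    ∃ y : E, (∀ α ∈ Rp, 0 < ⟪α, y⟫) ∧ y = x + ∑ α ∈ Rp, (c α / ⟪α, y⟫) • α := by
  classical
  set g : E → ℝ := fun z => (1/2 : ℝ) * ⟪z - x, z - x⟫ - ∑ α ∈ Rp, c α * Real.log ⟪α, z⟫
    with hg
  have hgz : ∀ z : E, g z = (1/2 : ℝ) * ⟪z - x, z - x⟫ - ∑ α ∈ Rp, c α * Real.log ⟪α, z⟫ :=
    fun z => rfl
  set B : ℝ := g w with hB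
  set C : ℝ := ∑ α ∈ Rp, c α * ‖α‖ with hC
  have hC0 : 0 ≤ C := Finset.sum_nonneg fun α hα => by
    have := hc α hα; positivity
  set A : ℝ := ‖x‖ + C with hA
  have hA0 : 0 ≤ A := by positivity
  set R : ℝ := max (max (2*A+2) (|B|+1)) ‖w‖ with hR
  have hR1 : 2*A+2 ≤ R := le_trans (le_max_left _ _) (le_max_left _ _)
  have hR2 : |B|+1 ≤ R := le_trans (le_max_right _ _) (le_max_left _ _)
  have hRw : ‖w‖ ≤ R := le_max_right _ _
  have hR0 : 0 < R := lt_of_lt_of_le (by positivity) hR2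
  set cmin : ℝ := Rp.inf' hne c with hcm
  have hcmin : 0 < cmin := by
    rw [hcm, Finset.lt_inf'_iff]; exact hc
  have hcmin_le : ∀ α ∈ Rp, cmin ≤ c α := fun α hα => Finset.inf'_le _ hα
  set εw : ℝ := Rp.inf' hne (fun α => ⟪α, w⟫) with hεw
  have hεw0 : 0 < εw := by rw [hεw, Finset.lt_inf'_iff]; exact hw
  set ε : ℝ := min (Real.exp (-(C*R + |B| + 1)/cmin)) εw with hε
  have hε0 : 0 < ε := lt_min (Real.exp_pos _) hεw0
  have hεlog : Real.log ε ≤ -(C*R + |B| + 1)/cmin :=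
    (Real.log_le_log hε0 (min_le_left _ _)).trans_eq (Real.log_exp _)
  have hεεw : ε ≤ εw := min_le_right _ _
  have hεwle : ∀ α ∈ Rp, εw ≤ ⟪α, w⟫ := fun α hα => Finset.inf'_le _ hα
  have hCeq : C = ∑ α ∈ Rp, c α * ‖α‖ := hC
  have hAeq : A = ‖x‖ + C := hA
  have hBw : B = g w := hB
  clear_value B C A R cmin εw ε g
  clear hB hC hA hR hcm hεw hε
  -- lower bound L1
  have L1 : ∀ z : E, (∀ α ∈ Rp, 0 < ⟪α, z⟫) → (1/2 : ℝ) * ‖z‖^2 - A * ‖z‖ ≤ g z := by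
    intro z hz
    have hsum : ∑ α ∈ Rp, c α * Real.log ⟪α, z⟫ ≤ C * ‖z‖ := by
      rw [hCeq, Finset.sum_mul]
      apply Finset.sum_le_sum
      intro α hα
      have h1 : Real.log ⟪α, z⟫ ≤ ⟪α, z⟫ := by
        have := Real.log_le_sub_one_of_pos (hz α hα); linarith
      have h2 : ⟪α, z⟫ ≤ ‖α‖ * ‖z‖ := real_inner_le_norm α z
      have hcα := (hc α hα).le
      calc c α * Real.log ⟪α, z⟫ ≤ c α * ⟪α, z⟫ := by nlinarith
        _ ≤ c α * (‖α‖ * ‖z‖) := by nlinarith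
        _ = c α * ‖α‖ * ‖z‖ := by ring
    have hn : ⟪z - x, z - x⟫ = ‖z - x‖^2 := real_inner_self_eq_norm_sq _
    have hnn : |‖z‖ - ‖x‖| ≤ ‖z - x‖ := abs_norm_sub_norm_le z x
    have hsq : (‖z‖ - ‖x‖)^2 ≤ ‖z - x‖^2 := by
      rw [← sq_abs (‖z‖ - ‖x‖)]
      exact pow_le_pow_left₀ (abs_nonneg _) hnn 2
    rw [hgz z, hn, hAeq]
    nlinarith [norm_nonneg x, norm_nonneg z, sq_nonneg ‖x‖]
  -- L3 : far away
  have L3 : ∀ z : E, (∀ α ∈ Rp, 0 < ⟪α, z⟫) → R < ‖z‖ → B < g z := by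
    intro z hz hzR
    have h1 := L1 z hz
    have habs : B ≤ |B| := le_abs_self B
    have hprod : 0 ≤ ‖z‖ * (‖z‖ - (2*A+2)) :=
      mul_nonneg (norm_nonneg z) (by linarith)
    have hBgz : B < 1/2 * ‖z‖^2 - A * ‖z‖ := by nlinarith
    linarith
  -- L2 : near boundary
  have L2 : ∀ z : E, (∀ α ∈ Rp, 0 < ⟪α, z⟫) → ‖z‖ ≤ R →
      (∃ α₀ ∈ Rp, ⟪α₀, z⟫ < ε) → B < g z := by
    rintro z hz hzR ⟨α₀, hα₀, hα₀ε⟩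
    have hsum : ∑ α ∈ Rp, c α * Real.log ⟪α, z⟫ ≤ -(|B| + 1) := by
      have hsplit : ∑ α ∈ Rp, c α * Real.log ⟪α, z⟫
          = c α₀ * Real.log ⟪α₀, z⟫ + ∑ α ∈ Rp.erase α₀, c α * Real.log ⟪α, z⟫ :=
        (Finset.add_sum_erase Rp _ hα₀).symm
      have hrest : ∑ α ∈ Rp.erase α₀, c α * Real.log ⟪α, z⟫ ≤ C * R := by
        have hterm : ∀ α ∈ Rp.erase α₀, c α * Real.log ⟪α, z⟫ ≤ c α * ‖α‖ * R := by
          intro α hα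
          have hαRp := Finset.mem_of_mem_erase hα
          have h1 : Real.log ⟪α, z⟫ ≤ ⟪α, z⟫ := by
            have := Real.log_le_sub_one_of_pos (hz α hαRp); linarith
          have h2 : ⟪α, z⟫ ≤ ‖α‖ * ‖z‖ := real_inner_le_norm α z
          have h3 : ‖α‖ * ‖z‖ ≤ ‖α‖ * R := by
            have := norm_nonneg α; nlinarith
          have hcα := (hc α hαRp).le
          nlinarith
        calc ∑ α ∈ Rp.erase α₀, c α * Real.log ⟪α, z⟫
            ≤ ∑ α ∈ Rp.erase α₀, c α * ‖α‖ * R := Finset.sum_le_sum hterm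
          _ ≤ ∑ α ∈ Rp, c α * ‖α‖ * R := by
              apply Finset.sum_le_sum_of_subset_of_nonneg (Finset.erase_subset _ _)
              intro α hα _
              have h4 := (hc α hα).le
              have h5 := norm_nonneg α
              positivity
          _ = C * R := by rw [hCeq, Finset.sum_mul]
      have hmain : c α₀ * Real.log ⟪α₀, z⟫ ≤ -(C*R + |B| + 1) := by
        have hlogz : Real.log ⟪α₀, z⟫ < Real.log ε := Real.log_lt_log (hz α₀ hα₀) hα₀ε
        have hlogε0 : Real.log ε < 0 := by
          have h1 : -(C*R + |B| + 1)/cmin < 0 := by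
            apply div_neg_of_neg_of_pos _ hcmin
            have h2 : 0 ≤ C * R := by positivity
            have h3 := abs_nonneg B
            linarith
          linarith
        have hle : c α₀ * Real.log ⟪α₀, z⟫ ≤ cmin * Real.log ε := by
          have h1 : c α₀ * Real.log ⟪α₀, z⟫ ≤ c α₀ * Real.log ε := by
            nlinarith [hc α₀ hα₀]
          have h2 : c α₀ * Real.log ε ≤ cmin * Real.log ε := by
            nlinarith [hcmin_le α₀ hα₀]
          linarith
        calc c α₀ * Real.log ⟪α₀, z⟫ ≤ cmin * Real.log ε := hle
          _ ≤ cmin * (-(C*R + |B| + 1)/cmin) := by nlinarith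
          _ = -(C*R + |B| + 1) := by field_simp
      rw [hsplit]; linarith
    have hnn : (0:ℝ) ≤ (1/2 : ℝ) * ⟪z - x, z - x⟫ := by
      have := real_inner_self_nonneg (x := z - x); linarith
    have habs : B ≤ |B| := le_abs_self B
    rw [hgz z]
    linarith
  -- the compact set
  have hKc : IsCompact {z : E | ‖z‖ ≤ R ∧ ∀ α ∈ Rp, ε ≤ ⟪α, z⟫} := by
    apply (isCompact_closedBall (0:E) R).of_isClosed_subset
    · have : {z : E | ‖z‖ ≤ R ∧ ∀ α ∈ Rp, ε ≤ ⟪α, z⟫}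
          = {z : E | ‖z‖ ≤ R} ∩ ⋂ α ∈ (Rp : Set E), {z : E | ε ≤ ⟪α, z⟫} := by
        ext z; simp [Set.mem_iInter]
      rw [this]
      apply IsClosed.inter
      · exact isClosed_le continuous_norm continuous_const
      · exact isClosed_biInter fun α hα =>
          isClosed_le continuous_const (innerSL ℝ α).continuous
    · intro z hz
      simpa [Metric.mem_closedBall, dist_zero_right] using hz.1
  have hwK : w ∈ {z : E | ‖z‖ ≤ R ∧ ∀ α ∈ Rp, ε ≤ ⟪α, z⟫} := by
    refine ⟨hRw, fun α hα => ?_⟩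
    exact le_trans hεεw (hεwle α hα)
  have hKpos : ∀ z ∈ {z : E | ‖z‖ ≤ R ∧ ∀ α ∈ Rp, ε ≤ ⟪α, z⟫}, ∀ α ∈ Rp, 0 < ⟪α, z⟫ := by
    intro z hz α hα
    exact lt_of_lt_of_le hε0 (hz.2 α hα)
  have hcont : ContinuousOn g {z : E | ‖z‖ ≤ R ∧ ∀ α ∈ Rp, ε ≤ ⟪α, z⟫} := by
    rw [hg]
    exact fun z hz =>
      (hasFDerivAt_g Rp c x z (fun α hα => (hKpos z hz α hα).ne')).continuousAt.continuousWithinAt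
  obtain ⟨y, hyK, hymin⟩ := hKc.exists_isMinOn ⟨w, hwK⟩ hcont
  have hyW : ∀ α ∈ Rp, 0 < ⟪α, y⟫ := hKpos y hyK
  have hyB : g y ≤ B := hBw ▸ hymin hwK
  -- global min on W
  have hWopen : IsOpen {z : E | ∀ α ∈ Rp, 0 < ⟪α, z⟫} := by
    have : {z : E | ∀ α ∈ Rp, 0 < ⟪α, z⟫} = ⋂ α ∈ (Rp : Set E), {z : E | 0 < ⟪α, z⟫} := by
      ext z; simp [Set.mem_iInter]
    rw [this]
    apply isOpen_biInter_finset
    intro α hα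
    exact isOpen_lt continuous_const (innerSL ℝ α).continuous
  have hglobal : IsMinOn g {z : E | ∀ α ∈ Rp, 0 < ⟪α, z⟫} y := by
    intro z hz
    simp only [Set.mem_setOf_eq] at hz
    by_cases hzK : z ∈ {z : E | ‖z‖ ≤ R ∧ ∀ α ∈ Rp, ε ≤ ⟪α, z⟫}
    · exact hymin hzK
    · simp only [Set.mem_setOf_eq, not_and, not_forall, not_le] at hzK
      rcases le_or_gt ‖z‖ R with hle | hlt
      · obtain ⟨α₀, hα₀, hα₀ε⟩ := hzK hle
        have := L2 z hz hle ⟨α₀, hα₀, hα₀ε⟩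
        simp only [Set.mem_setOf_eq]
        linarith
      · have := L3 z hz hlt
        simp only [Set.mem_setOf_eq]
        linarith
  have hyWmem : y ∈ {z : E | ∀ α ∈ Rp, 0 < ⟪α, z⟫} := hyW
  have hlocal : IsLocalMin g y := hglobal.isLocalMin (hWopen.mem_nhds hyWmem)
  have hfd : HasFDerivAt g (innerSL ℝ (y - x - ∑ α ∈ Rp, (c α / ⟪α, y⟫) • α)) y := by
    rw [hg]
    exact hasFDerivAt_g Rp c x y (fun α hα => (hyW α hα).ne')
  have hzero : innerSL ℝ (y - x - ∑ α ∈ Rp, (c α / ⟪α, y⟫) • α) = 0 :=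
    hlocal.hasFDerivAt_eq_zero hfd
  have hz0 : y - x - ∑ α ∈ Rp, (c α / ⟪α, y⟫) • α = 0 := by
    have h := congrFun (congrArg DFunLike.coe hzero) (y - x - ∑ α ∈ Rp, (c α / ⟪α, y⟫) • α)
    simp only [innerSL_apply_apply, ContinuousLinearMap.zero_apply] at h
    exact inner_self_eq_zero.mp h
  refine ⟨y, hyW, ?_⟩
  have h2 : y - (x + ∑ α ∈ Rp, (c α / ⟪α, y⟫) • α) = 0 := by
    rw [← sub_sub]; exact hz0
  exact sub_eq_zero.mp h2

theorem stmt_8 {d : ℕ}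
    (Rp : Finset (EuclideanSpace ℝ (Fin d))) (hne : Rp.Nonempty)
    (h0 : ∀ α ∈ Rp, α ≠ 0)
    (hW : ∃ w : EuclideanSpace ℝ (Fin d), ∀ α ∈ Rp, 0 < ⟪α, w⟫)
    (c : EuclideanSpace ℝ (Fin d) → ℝ) (hc : ∀ α ∈ Rp, 0 < c α)
    (x : EuclideanSpace ℝ (Fin d)) :
    ∃! y : EuclideanSpace ℝ (Fin d),
      (∀ α ∈ Rp, 0 < ⟪α, y⟫) ∧ y = x + ∑ α ∈ Rp, (c α / ⟪α, y⟫) • α := by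
  obtain ⟨w, hw⟩ := hW
  obtain ⟨y, hyW, hyeq⟩ := exists_sol Rp hne c hc w hw x
  exact ⟨y, ⟨hyW, hyeq⟩, fun z ⟨hzW, hzeq⟩ => uniq_sol Rp c hc x z y hzW hyW hzeq hyeq⟩
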